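/- Let ξ be a nonzero algebraic integer of degree d with complex conjugates ξ_1,…,ξ_d, and for n ∈ ℕ set S_n = ξ_1^n + ⋯ + ξ_d^n. If there exists an integer p ≥ 2 such that S_{np} = S_n for all n with 1 ≤ n ≤ d, then ξ is a root of unity. -/

import Mathlib

private lemma exists_enum (s : Multiset ℂ) :
    ∃ v : Fin (Multiset.card s) → ℂ, Finset.univ.val.map v = s := by
  refine ⟨fun i => s.toList.get (Fin.cast s.length_toList.symm i), ?_⟩
  rw [Fin.univ_val_map, ← List.ofFn_congr s.length_toList s.toList.get, List.ofFn_get]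
  exact s.coe_toList

private lemma multiset_newton (s : Multiset ℂ) (k : ℕ) :
    (k : ℂ) * s.esymm k = (-1) ^ (k + 1) *
      ∑ a ∈ Finset.HasAntidiagonal.antidiagonal k with a.1 < k,
        (-1) ^ a.1 * s.esymm a.1 * (s.map (· ^ a.2)).sum := by
  obtain ⟨v, hv⟩ := exists_enum s
  have h := congrArg (MvPolynomial.aeval v)
    (MvPolynomial.mul_esymm_eq_sum (Fin (Multiset.card s)) ℂ k)
  simp only [map_mul, map_sum, map_pow, map_neg, map_one, map_natCast,
    MvPolynomial.aeval_esymm_eq_multiset_esymm, MvPolynomial.psum, MvPolynomial.aeval_X, hv] at h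
  convert h using 4 with a ha
  rw [Finset.sum_eq_multiset_sum,
    show (fun x => v x ^ a.2) = (fun x : ℂ => x ^ a.2) ∘ v from rfl, ← Multiset.map_map, hv]

private lemma esymm_eq_of_psum_eq (s t : Multiset ℂ) (hcard : Multiset.card t = Multiset.card s)
    (hps : ∀ n, 1 ≤ n → n ≤ Multiset.card s → (s.map (· ^ n)).sum = (t.map (· ^ n)).sum) :
    ∀ k, k ≤ Multiset.card s → s.esymm k = t.esymm k := by
  intro k
  induction k using Nat.strong_induction_on with
  | _ k ih =>
    intro hk
    rcases Nat.eq_zero_or_pos k with rfl | hk0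
    · simp [Multiset.esymm, Multiset.powersetCard_zero_left]
    · have h1 := multiset_newton s k
      have h2 := multiset_newton t k
      have hsum : ∑ a ∈ Finset.HasAntidiagonal.antidiagonal k with a.1 < k,
            (-1 : ℂ) ^ a.1 * s.esymm a.1 * (s.map (· ^ a.2)).sum
          = ∑ a ∈ Finset.HasAntidiagonal.antidiagonal k with a.1 < k,
            (-1 : ℂ) ^ a.1 * t.esymm a.1 * (t.map (· ^ a.2)).sum := by
        refine Finset.sum_congr rfl fun a ha => ?_
        simp only [Finset.mem_filter, Finset.HasAntidiagonal.mem_antidiagonal] at ha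
        obtain ⟨hak, halt⟩ := ha
        have h2pos : 1 ≤ a.2 := by omega
        have h2le : a.2 ≤ Multiset.card s := by omega
        rw [ih a.1 halt (by omega), hps a.2 h2pos h2le]
      have : (k : ℂ) * s.esymm k = (k : ℂ) * t.esymm k := by rw [h1, h2, hsum]
      exact mul_left_cancel₀ (Nat.cast_ne_zero.mpr hk0.ne') this

open Polynomial in
private lemma multiset_eq_of_psum_eq (s t : Multiset ℂ) (hcard : Multiset.card t = Multiset.card s)
    (hps : ∀ n, 1 ≤ n → n ≤ Multiset.card s → (s.map (· ^ n)).sum = (t.map (· ^ n)).sum) :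
    t = s := by
  have hes := esymm_eq_of_psum_eq s t hcard hps
  have hpoly : (s.map fun a => X - C a).prod = (t.map fun a => X - C a).prod := by
    ext k
    rcases le_or_gt k (Multiset.card s) with hk | hk
    · rw [Multiset.prod_X_sub_C_coeff s hk, Multiset.prod_X_sub_C_coeff t (hcard ▸ hk), hcard,
        hes _ (Nat.sub_le _ _)]
    · rw [coeff_eq_zero_of_natDegree_lt, coeff_eq_zero_of_natDegree_lt] <;>
        rw [natDegree_multiset_prod_X_sub_C_eq_card] <;> omega
  have h1 := Polynomial.roots_multiset_prod_X_sub_C s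
  have h2 := Polynomial.roots_multiset_prod_X_sub_C t
  rw [← h1, ← h2, hpoly]

/-- Let `ξ` be a nonzero algebraic integer of degree `d` with complex conjugates
`ξ₁, …, ξ_d` (the roots of its minimal polynomial over `ℤ`, in `ℂ`), and set
`S n = ξ₁^n + ⋯ + ξ_d^n`.  If there is an integer `p ≥ 2` with `S (n*p) = S n` for all
`1 ≤ n ≤ d`, then `ξ` is a root of unity. -/
theorem root_of_unity_of_powerSums_eq (ξ : ℂ) (hξ : ξ ≠ 0) (hint : IsIntegral ℤ ξ)
    (d : ℕ) (hd : d = (minpoly ℤ ξ).natDegree)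
    (S : ℕ → ℂ)
    (hS : ∀ n : ℕ, S n = (((minpoly ℤ ξ).map (Int.castRingHom ℂ)).roots.map (· ^ n)).sum)
    (p : ℕ) (hp : 2 ≤ p) (hper : ∀ n : ℕ, 1 ≤ n → n ≤ d → S (n * p) = S n) :
    ∃ m : ℕ, 0 < m ∧ ξ ^ m = 1 := by
  set f := (minpoly ℤ ξ).map (Int.castRingHom ℂ) with hf
  have hmin_ne : minpoly ℤ ξ ≠ 0 := minpoly.ne_zero hint
  have hf_ne : f ≠ 0 :=
    (Polynomial.map_ne_zero_iff (RingHom.injective_int _)).mpr hmin_ne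
  have hcard : Multiset.card f.roots = d := by
    rw [hd, ← (minpoly.monic hint).natDegree_map (Int.castRingHom ℂ)]
    exact Polynomial.splits_iff_card_roots.mp (IsAlgClosed.splits _)
  have hxi : ξ ∈ f.roots := by
    rw [Polynomial.mem_roots hf_ne]
    have := minpoly.aeval ℤ ξ
    rwa [Polynomial.aeval_def, ← Polynomial.eval_map] at this
  -- the multiset of p-th powers of roots equals the multiset of roots
  have hroots : f.roots.map (· ^ p) = f.roots := by
    refine multiset_eq_of_psum_eq _ _ (Multiset.card_map _ _) fun n hn1 hn2 => ?_
    rw [Multiset.map_map]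
    have : ∀ r : ℂ, ((· ^ n) ∘ (· ^ p)) r = r ^ (n * p) := fun r => by
      simp [mul_comm n p, pow_mul]
    rw [Multiset.map_congr rfl fun r _ => this r]
    have := hper n hn1 (by rwa [← hcard])
    rw [hS, hS] at this
    exact this.symm
  have hpow : ∀ r ∈ f.roots, r ^ p ∈ f.roots := fun r hr =>
    hroots ▸ Multiset.mem_map_of_mem _ hr
  have hiter : ∀ k : ℕ, ξ ^ p ^ k ∈ f.roots := by
    intro k
    induction k with
    | zero => simpa using hxi
    | succ k ih =>
      have := hpow _ ih
      rwa [← pow_mul, ← pow_succ] at this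
  have hninj : ¬ Function.Injective (fun k : ℕ => ξ ^ p ^ k) := by
    intro hinj
    exact (Set.infinite_of_injective_forall_mem hinj
      (fun k => Multiset.mem_toFinset.mpr (hiter k) : ∀ k : ℕ,
        (fun k : ℕ => ξ ^ p ^ k) k ∈ (f.roots.toFinset : Set ℂ)))
      f.roots.toFinset.finite_toSet
  obtain ⟨i, j, hij, hne⟩ := Function.not_injective_iff.mp hninj
  wlog hlt : i < j generalizing i j
  · exact this j i hij.symm hne.symm (by omega)
  have hplt : p ^ i < p ^ j := Nat.pow_lt_pow_right (by omega) hlt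
  refine ⟨p ^ j - p ^ i, by omega, ?_⟩
  have h1 : ξ ^ p ^ i * ξ ^ (p ^ j - p ^ i) = ξ ^ p ^ i * 1 := by
    rw [mul_one, ← pow_add]
    rw [Nat.add_sub_cancel' hplt.le]
    exact hij.symm
  exact mul_left_cancel₀ (pow_ne_zero _ hξ) h1
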